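/- Let 𝔤 be the Lie algebra of strictly upper triangular d×d real matrices, and for 1 ≤ ℓ ≤ d−1 let 𝔲_ℓ = span{E_{1,j} : 2 ≤ j ≤ ℓ+1}. Then the centralizer of 𝔲_ℓ in 𝔤 is span({E_{1,j} : 2 ≤ j ≤ d} ∪ {E_{i,j} : ℓ+2 ≤ i < j ≤ d}), which has dimension (d−1) + (d−ℓ−2)(d−ℓ−1)/2. -/

import Mathlib

open Matrix Finset


/-- In the Lie algebra of strictly upper triangular `d × d` real matrices, the
centralizer of `𝔲_ℓ = span{E_{1,j} : 2 ≤ j ≤ ℓ+1}` (indices written `0`-based)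
is `span({E_{1,j} : 2 ≤ j ≤ d} ∪ {E_{i,j} : ℓ+2 ≤ i < j ≤ d})`, of dimension
`(d-1) + (d-ℓ-2)(d-ℓ-1)/2`. -/
theorem stmt17 (d ℓ : ℕ) (hℓ1 : 1 ≤ ℓ) (hℓ : ℓ ≤ d - 1) (hd : 2 ≤ d) :
    let E : Fin d → Fin d → Matrix (Fin d) (Fin d) ℝ :=
      fun i j => Matrix.single i j 1
    let uℓ : Submodule ℝ (Matrix (Fin d) (Fin d) ℝ) :=
      Submodule.span ℝ
        {B | ∃ j : Fin d, 1 ≤ (j : ℕ) ∧ (j : ℕ) ≤ ℓ ∧ B = E ⟨0, by omega⟩ j}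
    let Z : Submodule ℝ (Matrix (Fin d) (Fin d) ℝ) :=
      Submodule.span ℝ
        ({B | ∃ j : Fin d, 1 ≤ (j : ℕ) ∧ B = E ⟨0, by omega⟩ j} ∪
          {B | ∃ i j : Fin d, ℓ + 1 ≤ (i : ℕ) ∧ (i : ℕ) < (j : ℕ) ∧ B = E i j})
    ({X : Matrix (Fin d) (Fin d) ℝ |
        (∀ i j : Fin d, (j : ℕ) ≤ (i : ℕ) → X i j = 0) ∧
        ∀ U ∈ uℓ, X * U - U * X = 0} = ↑Z) ∧
    Module.finrank ℝ ↥Z = (d - 1) + (d - ℓ - 2) * (d - ℓ - 1) / 2 := by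
  classical
  intro E uℓ Z
  set z : Fin d := ⟨0, by omega⟩ with hz
  set P : Fin d × Fin d → Prop := fun p =>
    ((p.1 : ℕ) = 0 ∧ 1 ≤ (p.2 : ℕ)) ∨ (ℓ + 1 ≤ (p.1 : ℕ) ∧ (p.1 : ℕ) < (p.2 : ℕ)) with hPdef
  have hgen : ({B | ∃ j : Fin d, 1 ≤ (j : ℕ) ∧ B = E z j} ∪
      {B | ∃ i j : Fin d, ℓ + 1 ≤ (i : ℕ) ∧ (i : ℕ) < (j : ℕ) ∧ B = E i j})
      = (fun p : Fin d × Fin d => E p.1 p.2) '' {p | P p} := by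
    ext B
    constructor
    · rintro (⟨j, hj, rfl⟩ | ⟨i, j, hi, hij, rfl⟩)
      · exact ⟨(z, j), Or.inl ⟨rfl, hj⟩, rfl⟩
      · exact ⟨(i, j), Or.inr ⟨hi, hij⟩, rfl⟩
    · rintro ⟨⟨i, j⟩, (⟨h0, hj⟩ | ⟨hi, hij⟩), rfl⟩
      · left
        refine ⟨j, hj, ?_⟩
        have : i = z := Fin.ext h0
        rw [this]
      · right; exact ⟨i, j, hi, hij, rfl⟩
  have hZspan : Z = Submodule.span ℝ ((fun p : Fin d × Fin d => E p.1 p.2) '' {p | P p}) := by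
    rw [show Z = Submodule.span ℝ _ from rfl, hgen]
  let Z' : Submodule ℝ (Matrix (Fin d) (Fin d) ℝ) :=
    { carrier := {X | ∀ i j : Fin d, ¬ P (i, j) → X i j = 0}
      add_mem' := fun hx hy i j h => by
        simp only [Matrix.add_apply, hx i j h, hy i j h, add_zero]
      zero_mem' := fun i j h => rfl
      smul_mem' := fun c x hx i j h => by
        simp only [Matrix.smul_apply, hx i j h, smul_zero] }
  have hmemZ' : ∀ X : Matrix (Fin d) (Fin d) ℝ,
      X ∈ Z' ↔ ∀ i j : Fin d, ¬ P (i, j) → X i j = 0 := fun X => Iff.rfl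
  have hZZ' : Z = Z' := by
    apply le_antisymm
    · rw [hZspan, Submodule.span_le]
      rintro B ⟨⟨a, b⟩, hab, rfl⟩
      intro i j hij
      have hne : ¬(a = i ∧ b = j) := by
        rintro ⟨rfl, rfl⟩; exact hij hab
      exact Matrix.single_apply_of_ne (c := (1 : ℝ)) (h := hne)
    · intro X hX
      rw [hmemZ'] at hX
      rw [hZspan]
      rw [Matrix.matrix_eq_sum_single X]
      refine Submodule.sum_mem _ fun i _ => Submodule.sum_mem _ fun j _ => ?_
      by_cases hp : P (i, j)
      · have : Matrix.single i j (X i j) = (X i j) • E i j := by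
          rw [Matrix.smul_single, smul_eq_mul, mul_one]
        rw [this]
        exact Submodule.smul_mem _ _ (Submodule.subset_span ⟨(i, j), hp, rfl⟩)
      · rw [hX i j hp, Matrix.single_zero]
        exact Submodule.zero_mem _
  constructor
  · -- set equality
    rw [hZZ']
    ext X
    simp only [Set.mem_setOf_eq, SetLike.mem_coe, hmemZ']
    constructor
    · rintro ⟨hupper, hcomm⟩ i j hnP
      have hnP' : ¬(((i : ℕ) = 0 ∧ 1 ≤ (j : ℕ)) ∨
          (ℓ + 1 ≤ (i : ℕ) ∧ (i : ℕ) < (j : ℕ))) := hnP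
      by_cases hij : (j : ℕ) ≤ (i : ℕ)
      · exact hupper i j hij
      push_neg at hij
      have hi1 : 1 ≤ (i : ℕ) := by
        by_contra h
        exact hnP' (Or.inl ⟨by omega, by omega⟩)
      have hiℓ : (i : ℕ) ≤ ℓ := by
        by_contra h
        exact hnP' (Or.inr ⟨by omega, hij⟩)
      have hU : E z i ∈ uℓ := Submodule.subset_span ⟨i, hi1, hiℓ, rfl⟩
      have h := congrFun (congrFun (hcomm _ hU) z) j
      have hij' : i ≠ j := fun h' => by rw [h'] at hij; omega
      simp only [Matrix.sub_apply, Matrix.zero_apply] at h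
      have h1 : (X * E z i : Matrix (Fin d) (Fin d) ℝ) z j = 0 := by
        simp [E, Matrix.mul_apply, Matrix.single, hij']
      have h2 : (E z i * X : Matrix (Fin d) (Fin d) ℝ) z j = X i j := by
        simp [E, Matrix.mul_apply, Matrix.single]
      rw [h1, h2] at h
      linarith
    · intro hX
      have hX' : ∀ i j : Fin d, ¬(((i : ℕ) = 0 ∧ 1 ≤ (j : ℕ)) ∨
          (ℓ + 1 ≤ (i : ℕ) ∧ (i : ℕ) < (j : ℕ))) → X i j = 0 := hX
      have hupper : ∀ i j : Fin d, (j : ℕ) ≤ (i : ℕ) → X i j = 0 := by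
        intro i j hji
        refine hX' i j ?_
        rintro (⟨h0, h1⟩ | ⟨h1, h2⟩) <;> omega
      refine ⟨hupper, ?_⟩
      intro U hU
      have hker : uℓ ≤ LinearMap.ker (LinearMap.mulLeft ℝ X - LinearMap.mulRight ℝ X) := by
        rw [Submodule.span_le]
        rintro B ⟨m, hm1, hm2, rfl⟩
        simp only [SetLike.mem_coe, LinearMap.mem_ker, LinearMap.sub_apply,
          LinearMap.mulLeft_apply, LinearMap.mulRight_apply]
        have hXm : ∀ q : Fin d, X m q = 0 := by
          intro q
          refine hX' m q ?_
          rintro (⟨h0, _⟩ | ⟨h1, _⟩) <;> omega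
        have key1 : ∀ p q : Fin d,
            (X * E ⟨0, by omega⟩ m : Matrix (Fin d) (Fin d) ℝ) p q
              = if m = q then X p ⟨0, by omega⟩ else 0 := by
          intro p q
          simp [E, Matrix.mul_apply, Matrix.single, ite_and]
        have key2 : ∀ p q : Fin d,
            (E ⟨0, by omega⟩ m * X : Matrix (Fin d) (Fin d) ℝ) p q
              = if (⟨0, by omega⟩ : Fin d) = p then X m q else 0 := by
          intro p q
          simp [E, Matrix.mul_apply, Matrix.single, ite_and]
        ext p q
        rw [Matrix.sub_apply, key1 p q, key2 p q, Matrix.zero_apply]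
        have e1 : X p ⟨0, by omega⟩ = 0 := hupper p ⟨0, by omega⟩ (by simp)
        split_ifs <;> simp [e1, hXm]
      have := hker hU
      simpa only [LinearMap.mem_ker, LinearMap.sub_apply, LinearMap.mulLeft_apply,
        LinearMap.mulRight_apply] using this
  · -- dimension
    rw [hZspan]
    have hsub : (fun p : Fin d × Fin d => E p.1 p.2) '' {p | P p}
        ⊆ Set.range (Matrix.stdBasis ℝ (Fin d) (Fin d)) := by
      rintro B ⟨⟨a, b⟩, _, rfl⟩
      exact ⟨(a, b), Matrix.stdBasis_eq_single ℝ a b⟩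
    have hli : LinearIndependent ℝ
        ((↑) : ((fun p : Fin d × Fin d => E p.1 p.2) '' {p | P p}) →
          Matrix (Fin d) (Fin d) ℝ) :=
      ((Matrix.stdBasis ℝ (Fin d) (Fin d)).linearIndependent.linearIndepOn_id).mono hsub
    rw [finrank_span_set_eq_card hli]
    have hinj : Function.Injective (fun p : Fin d × Fin d => E p.1 p.2) := by
      have he : (fun p : Fin d × Fin d => E p.1 p.2)
          = fun p => Matrix.stdBasis ℝ (Fin d) (Fin d) p := by
        funext p
        exact (Matrix.stdBasis_eq_single ℝ p.1 p.2).symm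
      rw [he]
      exact (Matrix.stdBasis ℝ (Fin d) (Fin d)).injective
    rw [Set.toFinset_image, Finset.card_image_of_injective _ hinj, Set.toFinset_setOf]
    -- now count (univ.filter P).card
    have hrow : ∀ m : ℕ, (∑ j : Fin d, if m ≤ (j : ℕ) then 1 else 0) = d - m := by
      intro m
      rw [Fin.sum_univ_eq_sum_range (fun b => if m ≤ b then 1 else 0) d,
        ← Finset.card_filter]
      have : (range d).filter (fun b => m ≤ b) = Ico m d := by
        ext b
        simp only [Finset.mem_filter, Finset.mem_range, Finset.mem_Ico]
        omega
      rw [this, Nat.card_Ico]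
    have step1 : ∀ i : Fin d,
        (∑ j : Fin d, if P (i, j) then 1 else 0)
          = (if (i : ℕ) = 0 then d - 1 else 0)
            + (if ℓ + 1 ≤ (i : ℕ) then d - 1 - (i : ℕ) else 0) := by
      intro i
      by_cases h0 : (i : ℕ) = 0
      · have hc : ∀ j : Fin d, (if P (i, j) then (1 : ℕ) else 0)
            = if 1 ≤ (j : ℕ) then 1 else 0 := by
          intro j
          refine if_congr ?_ rfl rfl
          constructor
          · intro hp
            have hp2 : (((i : ℕ) = 0 ∧ 1 ≤ (j : ℕ)) ∨
              (ℓ + 1 ≤ (i : ℕ) ∧ (i : ℕ) < (j : ℕ))) := hp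
            rcases hp2 with ⟨_, h⟩ | ⟨h, _⟩
            · exact h
            · omega
          · intro h; exact Or.inl ⟨h0, h⟩
        rw [Finset.sum_congr rfl fun j _ => hc j, hrow 1, h0]
        have : ¬ (ℓ + 1 ≤ 0) := by omega
        simp [this]
      · by_cases h1 : ℓ + 1 ≤ (i : ℕ)
        · have hc : ∀ j : Fin d, (if P (i, j) then (1 : ℕ) else 0)
              = if (i : ℕ) + 1 ≤ (j : ℕ) then 1 else 0 := by
            intro j
            refine if_congr ?_ rfl rfl
            constructor
            · intro hp
              have hp2 : (((i : ℕ) = 0 ∧ 1 ≤ (j : ℕ)) ∨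
                (ℓ + 1 ≤ (i : ℕ) ∧ (i : ℕ) < (j : ℕ))) := hp
              rcases hp2 with ⟨h, _⟩ | ⟨_, h⟩ <;> omega
            · intro h
              exact (Or.inr ⟨h1, by omega⟩ : (((i : ℕ) = 0 ∧ 1 ≤ (j : ℕ)) ∨
                (ℓ + 1 ≤ (i : ℕ) ∧ (i : ℕ) < (j : ℕ))))
          rw [Finset.sum_congr rfl fun j _ => hc j, hrow ((i : ℕ) + 1)]
          rw [if_neg h0, if_pos h1]
          omega
        · have hc : ∀ j : Fin d, (if P (i, j) then (1 : ℕ) else 0) = 0 := by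
            intro j
            rw [if_neg]
            intro hp
            have hp2 : (((i : ℕ) = 0 ∧ 1 ≤ (j : ℕ)) ∨
              (ℓ + 1 ≤ (i : ℕ) ∧ (i : ℕ) < (j : ℕ))) := hp
            rcases hp2 with ⟨h, _⟩ | ⟨h, _⟩ <;> omega
          rw [Finset.sum_congr rfl fun j _ => hc j]
          rw [if_neg h0, if_neg h1]
          simp
    rw [Finset.card_filter, Fintype.sum_prod_type]
    rw [Finset.sum_congr rfl fun i _ => step1 i]
    rw [Finset.sum_add_distrib]
    have hA : (∑ i : Fin d, if (i : ℕ) = 0 then d - 1 else 0) = d - 1 := by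
      rw [Fin.sum_univ_eq_sum_range (fun a => if a = 0 then d - 1 else 0) d]
      rw [Finset.sum_ite_eq' (range d) 0 (fun _ => d - 1)]
      rw [if_pos (Finset.mem_range.mpr (by omega))]
    have hB : (∑ i : Fin d, if ℓ + 1 ≤ (i : ℕ) then d - 1 - (i : ℕ) else 0)
        = (d - ℓ - 2) * (d - ℓ - 1) / 2 := by
      rw [Fin.sum_univ_eq_sum_range (fun a => if ℓ + 1 ≤ a then d - 1 - a else 0) d]
      rw [← Finset.sum_filter]
      have hfil : (range d).filter (fun a => ℓ + 1 ≤ a) = Ico (ℓ + 1) d := by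
        ext b
        simp only [Finset.mem_filter, Finset.mem_range, Finset.mem_Ico]
        omega
      rw [hfil, Finset.sum_Ico_eq_sum_range]
      have hn : d - (ℓ + 1) = d - ℓ - 1 := by omega
      rw [hn]
      have : ∀ k ∈ range (d - ℓ - 1), d - 1 - (ℓ + 1 + k) = (d - ℓ - 1) - 1 - k := by
        intro k hk
        rw [Finset.mem_range] at hk
        omega
      rw [Finset.sum_congr rfl this]
      rw [Finset.sum_range_reflect (fun x => x) (d - ℓ - 1)]
      rw [Finset.sum_range_id]
      have : d - ℓ - 1 - 1 = d - ℓ - 2 := by omega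
      rw [this, Nat.mul_comm]
    rw [hA, hB]
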